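/- Let k ≥ 2, let G be a k-dicritical digraph and let x ∈ V(G). Then N^{s+}(x) = ∅ if and only if N^{s−}(x) = ∅, where N^{s+}(x) = {y : (x,y) ∈ A(G) and (y,x) ∉ A(G)} is the set of out-neighbours of x joined to x by a simple arc, and N^{s−}(x) = {y : (y,x) ∈ A(G) and (x,y) ∉ A(G)} is the set of in-neighbours of x joined to x by a simple arc. -/

import Mathlib

/-- A (simple) digraph: a finite vertex set (of naturals) together with a finite
set of arcs between distinct vertices. -/
structure FDigraph where
  verts : Finset ℕ
  arcs : Finset (ℕ × ℕ)
  wf : ∀ a ∈ arcs, a.1 ∈ verts ∧ a.2 ∈ verts ∧ a.1 ≠ a.2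

namespace FDigraph

/-- Smart constructor: keeps only the legal arcs. -/
def mk' (V : Finset ℕ) (A : Finset (ℕ × ℕ)) : FDigraph where
  verts := V
  arcs := A.filter fun a => a.1 ∈ V ∧ a.2 ∈ V ∧ a.1 ≠ a.2
  wf := by
    intro a ha
    simp only [Finset.mem_filter] at ha
    exact ha.2

/-- A directed cycle, given as its (nonempty, duplicate-free) list of vertices:
every cyclically consecutive pair is an arc. -/
def IsDicycle (G : FDigraph) (l : List ℕ) : Prop :=
  l ≠ [] ∧ l.Nodup ∧ ∀ p ∈ l.zip (l.rotate 1), p ∈ G.arcs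

/-- A set of vertices is acyclic if it contains no directed cycle. -/
def AcyclicOn (G : FDigraph) (S : Set ℕ) : Prop :=
  ¬ ∃ l, G.IsDicycle l ∧ ∀ v ∈ l, v ∈ S

/-- A `k`-dicolouring: colours `0, …, k-1`, every colour class acyclic. -/
def IsDicolouring (G : FDigraph) (k : ℕ) (φ : ℕ → ℕ) : Prop :=
  (∀ v ∈ G.verts, φ v < k) ∧ ∀ c, G.AcyclicOn {v | φ v = c}

/-- The dichromatic number. -/
noncomputable def dichi (G : FDigraph) : ℕ := sInf {k | ∃ φ, G.IsDicolouring k φ}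

/-- Subdigraph relation. -/
def Subdigraph (H G : FDigraph) : Prop := H.verts ⊆ G.verts ∧ H.arcs ⊆ G.arcs

/-- `G` is `k`-dicritical. -/
def Dicritical (G : FDigraph) (k : ℕ) : Prop :=
  G.dichi = k ∧ ∀ H, Subdigraph H G → H ≠ G → H.dichi ≤ k - 1

/-- Induced subdigraph on a finite set of vertices. -/
def induce (G : FDigraph) (S : Finset ℕ) : FDigraph := mk' (G.verts ∩ S) G.arcs

def outDeg (G : FDigraph) (v : ℕ) : ℕ := (G.arcs.filter fun a => a.1 = v).card
def inDeg (G : FDigraph) (v : ℕ) : ℕ := (G.arcs.filter fun a => a.2 = v).card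
def deg (G : FDigraph) (v : ℕ) : ℕ := G.outDeg v + G.inDeg v

/-- Weak adjacency: an arc in either direction. -/
def wadj (G : FDigraph) (u v : ℕ) : Prop := (u, v) ∈ G.arcs ∨ (v, u) ∈ G.arcs

/-- Weak reachability. -/
def WReach (G : FDigraph) : ℕ → ℕ → Prop := Relation.ReflTransGen G.wadj

/-- A digraph is connected when its underlying graph is connected
(the empty digraph counts as connected). -/
def Connected (G : FDigraph) : Prop := ∀ u ∈ G.verts, ∀ v ∈ G.verts, G.WReach u v

/-- The set of connected components. -/
def components (G : FDigraph) : Set (Set ℕ) :=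
  {C | ∃ v ∈ G.verts, C = {u | u ∈ G.verts ∧ G.WReach v u}}

/-- The number of connected components. -/
noncomputable def numComponents (G : FDigraph) : ℕ := G.components.ncard

/-- Isomorphism of digraphs. -/
def Iso (G H : FDigraph) : Prop :=
  ∃ f : ℕ → ℕ, Set.BijOn f ↑G.verts ↑H.verts ∧
    ∀ u ∈ G.verts, ∀ v ∈ G.verts, ((u, v) ∈ G.arcs ↔ (f u, f v) ∈ H.arcs)

/-- The bidirected (complete) digraph `↔K_n`. -/
def completeD (n : ℕ) : FDigraph := mk' (Finset.range n) (Finset.range n ×ˢ Finset.range n)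

/-- The directed cycle `C⃗_n`. -/
def dirCycle (n : ℕ) : FDigraph :=
  mk' (Finset.range n)
    ((Finset.range n ×ˢ Finset.range n).filter fun a => a.2 = (a.1 + 1) % n)

/-- The bidirected cycle `↔C_n`. -/
def biCycle (n : ℕ) : FDigraph :=
  mk' (Finset.range n)
    ((Finset.range n ×ˢ Finset.range n).filter fun a =>
      a.2 = (a.1 + 1) % n ∨ a.1 = (a.2 + 1) % n)

/-- The Dirac join of `↔K_{k-2}` (on `{0,…,k-3}`) and the directed triangle
`C⃗_3` (on `{k-2, k-1, k}`). -/
def diracJoinExample (k : ℕ) : FDigraph :=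
  mk' (Finset.range (k + 1))
    ((Finset.range (k + 1) ×ˢ Finset.range (k + 1)).filter fun a =>
      a.1 < k - 2 ∨ a.2 < k - 2 ∨ a.2 = (if a.1 = k then k - 2 else a.1 + 1))

end FDigraph

namespace FDigraph

/-- In a dicycle, every vertex has a successor along the cycle. -/
lemma exists_succ {G : FDigraph} {l : List ℕ} (hl : G.IsDicycle l) {x : ℕ} (hx : x ∈ l) :
    ∃ z, z ∈ l ∧ z ≠ x ∧ (x, z) ∈ G.arcs := by
  obtain ⟨-, -, harcs⟩ := hl
  have hmap : (l.zip (l.rotate 1)).map Prod.fst = l := List.map_fst_zip (by simp)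
  rw [← hmap] at hx
  obtain ⟨p, hp, hp1⟩ := List.mem_map.1 hx
  refine ⟨p.2, ?_, ?_, ?_⟩
  · exact List.mem_rotate.1 (List.of_mem_zip hp).2
  · have := (G.wf p (harcs p hp)).2.2; rw [hp1] at this; exact fun h => this h.symm
  · rw [← hp1]; exact harcs p hp

/-- In a dicycle, every vertex has a predecessor along the cycle. -/
lemma exists_pred {G : FDigraph} {l : List ℕ} (hl : G.IsDicycle l) {x : ℕ} (hx : x ∈ l) :
    ∃ z, z ∈ l ∧ z ≠ x ∧ (z, x) ∈ G.arcs := by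
  obtain ⟨-, -, harcs⟩ := hl
  have hmap : (l.zip (l.rotate 1)).map Prod.snd = l.rotate 1 := List.map_snd_zip (by simp)
  have hx' : x ∈ (l.zip (l.rotate 1)).map Prod.snd := by rw [hmap]; exact List.mem_rotate.2 hx
  obtain ⟨p, hp, hp2⟩ := List.mem_map.1 hx'
  refine ⟨p.1, (List.of_mem_zip hp).1, ?_, ?_⟩
  · have := (G.wf p (harcs p hp)).2.2; rw [hp2] at this; exact this
  · rw [← hp2]; exact harcs p hp

/-- Every digraph has some dicolouring. -/
lemma exists_dicolouring (G : FDigraph) : ∃ n φ, G.IsDicolouring n φ := by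
  classical
  set L := G.verts.sort (· ≤ ·) with hL
  refine ⟨L.length, fun v => L.idxOf v, fun v hv => ?_, fun c ⟨l, hl, hmem⟩ => ?_⟩
  · exact List.idxOf_lt_length_iff.2 (by simpa [hL] using hv)
  · obtain ⟨v, hv⟩ := List.exists_mem_of_ne_nil l hl.1
    obtain ⟨z, hz, hzv, hxz⟩ := exists_succ hl hv
    have hvV : v ∈ G.verts := (G.wf _ hxz).1
    have hzV : z ∈ G.verts := (G.wf _ hxz).2.1
    have h1 : L.idxOf v = c := hmem v hv
    have h2 : L.idxOf z = c := hmem z hz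
    have : v = z := (List.idxOf_inj (l := L) (y := z) (by simpa [hL] using hvV)).1
      (h1.trans h2.symm)
    exact hzv this.symm

lemma dicolouring_mono {G : FDigraph} {m n : ℕ} {φ : ℕ → ℕ} (h : G.IsDicolouring m φ)
    (hmn : m ≤ n) : G.IsDicolouring n φ :=
  ⟨fun v hv => lt_of_lt_of_le (h.1 v hv) hmn, h.2⟩

lemma exists_dicolouring_of_dichi_le {G : FDigraph} {n : ℕ} (h : G.dichi ≤ n) :
    ∃ φ, G.IsDicolouring n φ := by
  obtain ⟨m, φ, hφ⟩ := G.exists_dicolouring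
  have hne : {k | ∃ φ, G.IsDicolouring k φ}.Nonempty := ⟨m, φ, hφ⟩
  obtain ⟨ψ, hψ⟩ := Nat.sInf_mem hne
  exact ⟨ψ, dicolouring_mono hψ h⟩

lemma dichi_le_of_dicolouring {G : FDigraph} {n : ℕ} {φ : ℕ → ℕ} (h : G.IsDicolouring n φ) :
    G.dichi ≤ n := Nat.sInf_le ⟨φ, h⟩

/-- Key lemma: a `k`-dicritical digraph (`k ≥ 2`) cannot have a simple arc `(a,b)`
with an endpoint `x` such that every dicycle through `x` yields a monochromatic-able
digon at `x` avoiding `(a,b)`. -/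
lemma aux (k : ℕ) (hk : 2 ≤ k) (G : FDigraph) (hG : G.Dicritical k) (a b : ℕ)
    (hab : (a, b) ∈ G.arcs) (x : ℕ) (hxab : x = a ∨ x = b)
    (hdig : ∀ l, G.IsDicycle l → x ∈ l →
      ∃ z, z ∈ l ∧ z ≠ x ∧ (x, z) ∈ G.arcs ∧ (z, x) ∈ G.arcs ∧
        (x, z) ≠ (a, b) ∧ (z, x) ≠ (a, b)) : False := by
  classical
  -- the digraph with arc (a,b) removed
  set H : FDigraph := ⟨G.verts, G.arcs.erase (a, b), fun p hp => G.wf p (Finset.mem_of_mem_erase hp)⟩ with hH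
  have hsub : Subdigraph H G := ⟨le_refl _, Finset.erase_subset _ _⟩
  have hne : H ≠ G := by
    intro h
    have : (a, b) ∈ H.arcs := h ▸ hab
    exact (Finset.notMem_erase _ _) this
  have hle : H.dichi ≤ k - 1 := hG.2 H hsub hne
  obtain ⟨φ, hφ⟩ := exists_dicolouring_of_dichi_le hle
  -- φ is a dicolouring of G
  have hGcol : G.IsDicolouring (k - 1) φ := by
    refine ⟨hφ.1, fun c ⟨l, hl, hmem⟩ => ?_⟩
    by_cases hcase : ∀ p ∈ l.zip (l.rotate 1), p ∈ H.arcs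
    · exact hφ.2 c ⟨l, ⟨hl.1, hl.2.1, hcase⟩, hmem⟩
    · push_neg at hcase
      obtain ⟨p, hp, hpH⟩ := hcase
      have hpG : p ∈ G.arcs := hl.2.2 p hp
      have hpab : p = (a, b) := by
        by_contra h
        exact hpH (Finset.mem_erase.2 ⟨h, hpG⟩)
      -- a, b ∈ l
      have haL : a ∈ l := by
        have := (List.of_mem_zip hp).1; rwa [hpab] at this
      have hbL : b ∈ l := by
        have := List.mem_rotate.1 (List.of_mem_zip hp).2; rwa [hpab] at this
      have hxL : x ∈ l := by rcases hxab with h | h <;> rw [h] <;> assumption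
      obtain ⟨z, hzL, hzx, hxz, hzx', hne1, hne2⟩ := hdig l hl hxL
      -- the digon [x, z] is a monochromatic dicycle in H
      refine hφ.2 c ⟨[x, z], ⟨by simp, by simp [hzx.symm, Ne.symm hzx], ?_⟩, ?_⟩
      · intro q hq
        have hrot : ([x, z]).rotate 1 = [z, x] := by simp [List.rotate]
        rw [hrot] at hq
        simp only [List.zip, List.zipWith, List.mem_cons, List.not_mem_nil, or_false] at hq
        rcases hq with h | h <;> subst h
        · exact Finset.mem_erase.2 ⟨hne1, hxz⟩
        · exact Finset.mem_erase.2 ⟨hne2, hzx'⟩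
      · intro v hv
        simp only [List.mem_cons, List.not_mem_nil, or_false] at hv
        rcases hv with h | h <;> rw [h]
        exacts [hmem x hxL, hmem z hzL]
  have := dichi_le_of_dicolouring hGcol
  rw [hG.1] at this
  omega

end FDigraph


/-- in a `k`-dicritical digraph, a vertex has a simple out-arc iff
it has a simple in-arc. -/
theorem simple_out_iff_simple_in (k : ℕ) (hk : 2 ≤ k) (G : FDigraph)
    (hG : G.Dicritical k) (x : ℕ) (hx : x ∈ G.verts) :
    ({y | (x, y) ∈ G.arcs ∧ (y, x) ∉ G.arcs} = (∅ : Set ℕ)) ↔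
      ({y | (y, x) ∈ G.arcs ∧ (x, y) ∉ G.arcs} = (∅ : Set ℕ)) := by
  constructor
  · intro hout
    by_contra hin
    obtain ⟨y, hyx, hxy⟩ := Set.nonempty_iff_ne_empty.2 hin
    -- every out-neighbour of x is a digon neighbour
    have hdigon : ∀ z, (x, z) ∈ G.arcs → (z, x) ∈ G.arcs := by
      intro z hz
      by_contra h
      exact Set.eq_empty_iff_forall_notMem.1 hout z ⟨hz, h⟩
    have hyne : y ≠ x := (G.wf _ hyx).2.2
    refine FDigraph.aux k hk G hG y x hyx x (Or.inr rfl) ?_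
    intro l hl hxl
    obtain ⟨z, hzl, hzx, hxz⟩ := FDigraph.exists_succ hl hxl
    refine ⟨z, hzl, hzx, hxz, hdigon z hxz, ?_, ?_⟩
    · intro h
      have : x = y := congrArg Prod.fst h
      exact hyne this.symm
    · intro h
      have hzy : z = y := congrArg Prod.fst h
      rw [hzy] at hxz
      exact hxy hxz
  · intro hin
    by_contra hout
    obtain ⟨y, hxy, hyx⟩ := Set.nonempty_iff_ne_empty.2 hout
    have hdigon : ∀ z, (z, x) ∈ G.arcs → (x, z) ∈ G.arcs := by
      intro z hz
      by_contra h
      exact Set.eq_empty_iff_forall_notMem.1 hin z ⟨hz, h⟩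
    have hyne : x ≠ y := (G.wf _ hxy).2.2
    refine FDigraph.aux k hk G hG x y hxy x (Or.inl rfl) ?_
    intro l hl hxl
    obtain ⟨z, hzl, hzx, hzxarc⟩ := FDigraph.exists_pred hl hxl
    refine ⟨z, hzl, hzx, hdigon z hzxarc, hzxarc, ?_, ?_⟩
    · intro h
      have hzy : z = y := congrArg Prod.snd h
      rw [hzy] at hzxarc
      exact hyx hzxarc
    · intro h
      exact hyne (congrArg Prod.snd h)
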